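/- arXiv:1708.06256 — 2 statements merged into one kernel-verified Lean document; each statement's English description precedes it below -/
import Mathlib

section
/- Let G(x) be the n×n matrix with entries G(x)ᵢⱼ = δᵢⱼ/xⱼ + hᵢⱼ(x), defined for x in the positive orthant (0,∞)ⁿ, where H = (hᵢⱼ(x)) is a symmetric matrix of functions that remain bounded as x → 0. Then the cofactor Cof(G(x))ᵢⱼ satisfies Cof(G(x))ᵢⱼ · x₁⋯xₙ → 0 as x → 0 in the positive orthant, for every i, j. -/
open Matrix Filter

/-- For `G(x)ᵢⱼ = δᵢⱼ/xⱼ + hᵢⱼ(x)` on the positive orthant, with `h` symmetric and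
bounded near `0`, the cofactors satisfy `x₁⋯xₙ · Cof(G(x))ᵢⱼ → 0` as `x → 0` in the
orthant.  (The cofactor matrix is the transpose of the adjugate: `Cof(A)ᵢⱼ = adjugate A j i`.) -/
theorem stmt3 (n : ℕ) (h : (Fin n → ℝ) → Matrix (Fin n) (Fin n) ℝ)
    (hsymm : ∀ x i j, h x i j = h x j i)
    (hbdd : ∀ i j, ∃ C > 0, ∃ ε > 0, ∀ x : Fin n → ℝ, (∀ k, 0 < x k) → ‖x‖ < ε →
      |h x i j| ≤ C)
    (G : (Fin n → ℝ) → Matrix (Fin n) (Fin n) ℝ)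
    (hG : ∀ x i j, G x i j = (if i = j then 1 / x j else 0) + h x i j) :
    ∀ i j, Tendsto (fun x : Fin n → ℝ => (∏ k, x k) * (Matrix.adjugate (G x)) j i)
      (nhdsWithin 0 {x : Fin n → ℝ | ∀ k, 0 < x k}) (nhds 0) := by
  intro i j
  set F := nhdsWithin (0 : Fin n → ℝ) {x : Fin n → ℝ | ∀ k, 0 < x k} with hF
  -- coordinate functions tend to 0
  have hcoord : ∀ a : Fin n, Tendsto (fun x : Fin n → ℝ => x a) F (nhds 0) := by
    intro a
    have := (continuous_apply a).tendsto (0 : Fin n → ℝ)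
    simpa using this.mono_left nhdsWithin_le_nhds
  -- the perturbation terms x a * h x a b tend to 0
  have hzero : ∀ a b : Fin n, Tendsto (fun x : Fin n → ℝ => x a * h x a b) F (nhds 0) := by
    intro a b
    obtain ⟨C, hC, ε, hε, hbound⟩ := hbdd a b
    have hgt : Tendsto (fun x : Fin n → ℝ => |x a| * C) F (nhds 0) := by
      have := (hcoord a).abs.mul_const C
      simpa using this
    refine squeeze_zero_norm' ?_ hgt
    · have h1 : ∀ᶠ x in F, x ∈ {x : Fin n → ℝ | ∀ k, 0 < x k} :=
        eventually_mem_nhdsWithin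
      have h2 : ∀ᶠ x in F, ‖x‖ < ε := by
        have hball : ∀ᶠ x in nhds (0 : Fin n → ℝ), ‖x‖ < ε := by
          filter_upwards [Metric.ball_mem_nhds (0 : Fin n → ℝ) hε] with x hx
          simpa [Metric.mem_ball, dist_zero_right] using hx
        exact hball.filter_mono nhdsWithin_le_nhds
      filter_upwards [h1, h2] with x hx hxε
      have hb := hbound x hx hxε
      calc ‖x a * h x a b‖ = |x a| * |h x a b| := abs_mul _ _
        _ ≤ |x a| * C := mul_le_mul_of_nonneg_left hb (abs_nonneg _)
  -- the matrix 1 + diagonal x * h x tends to 1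
  have hM : Tendsto (fun x : Fin n → ℝ =>
      (1 : Matrix (Fin n) (Fin n) ℝ) + Matrix.diagonal x * h x) F (nhds 1) := by
    refine tendsto_pi_nhds.2 ?_
    intro a
    refine tendsto_pi_nhds.2 ?_
    intro b
    have : Tendsto (fun x : Fin n → ℝ =>
        (1 : Matrix (Fin n) (Fin n) ℝ) a b + x a * h x a b) F (nhds ((1 : Matrix (Fin n) (Fin n) ℝ) a b + 0)) :=
      tendsto_const_nhds.add (hzero a b)
    simpa [Matrix.add_apply, Matrix.diagonal_mul] using this
  -- adjugate is continuous
  have hcont : Continuous fun A : Matrix (Fin n) (Fin n) ℝ => Matrix.adjugate A :=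
    Continuous.matrix_adjugate continuous_id
  have hadj : Tendsto (fun x : Fin n → ℝ =>
      Matrix.adjugate ((1 : Matrix (Fin n) (Fin n) ℝ) + Matrix.diagonal x * h x)) F
      (nhds (Matrix.adjugate 1)) := (hcont.tendsto 1).comp hM
  have hadjE : Tendsto (fun x : Fin n → ℝ =>
      Matrix.adjugate ((1 : Matrix (Fin n) (Fin n) ℝ) + Matrix.diagonal x * h x) j i) F
      (nhds ((Matrix.adjugate (1 : Matrix (Fin n) (Fin n) ℝ)) j i)) :=
    tendsto_pi_nhds.1 (tendsto_pi_nhds.1 hadj j) i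
  -- key algebraic identity on the orthant
  have key : ∀ x : Fin n → ℝ, (∀ k, 0 < x k) →
      (∏ k, x k) * (Matrix.adjugate (G x)) j i
        = x i * (Matrix.adjugate ((1 : Matrix (Fin n) (Fin n) ℝ) + Matrix.diagonal x * h x)) j i := by
    intro x hx
    have hfac : G x = Matrix.diagonal (fun k => (x k)⁻¹) *
        ((1 : Matrix (Fin n) (Fin n) ℝ) + Matrix.diagonal x * h x) := by
      ext a b
      rw [Matrix.diagonal_mul, hG]
      rcases eq_or_ne a b with rfl | hab
      · simp [Matrix.add_apply, Matrix.one_apply, Matrix.diagonal_mul, mul_add,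
          inv_mul_cancel_left₀ (hx a).ne', one_div]
      · simp [Matrix.add_apply, Matrix.one_apply, hab, Matrix.diagonal_mul, mul_add,
          inv_mul_cancel_left₀ (hx a).ne']
    rw [hfac, Matrix.adjugate_mul_distrib, Matrix.adjugate_diagonal, Matrix.mul_diagonal]
    have h1 : (∏ k, x k) * ∏ k ∈ Finset.univ.erase i, (x k)⁻¹ = x i := by
      rw [← Finset.mul_prod_erase Finset.univ x (Finset.mem_univ i), mul_assoc,
        ← Finset.prod_mul_distrib]
      have hone : ∀ k ∈ Finset.univ.erase i, x k * (x k)⁻¹ = 1 := fun k _ =>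
        mul_inv_cancel₀ (hx k).ne'
      rw [Finset.prod_congr rfl hone, Finset.prod_const_one, mul_one]
    calc (∏ k, x k) * (Matrix.adjugate _ j i * ∏ k ∈ Finset.univ.erase i, (x k)⁻¹)
        = ((∏ k, x k) * ∏ k ∈ Finset.univ.erase i, (x k)⁻¹) * Matrix.adjugate _ j i := by ring
      _ = x i * Matrix.adjugate _ j i := by rw [h1]
  -- conclude
  have hfinal : Tendsto (fun x : Fin n → ℝ =>
      x i * Matrix.adjugate ((1 : Matrix (Fin n) (Fin n) ℝ) + Matrix.diagonal x * h x) j i) F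
      (nhds 0) := by
    have := (hcoord i).mul hadjE
    simpa using this
  refine hfinal.congr' ?_
  filter_upwards [eventually_mem_nhdsWithin] with x hx
  exact (key x hx).symm
end

section
/- Let g : (0,∞)ⁿ → ℝ be g(x) = (1/2)(∑ᵢ₌₁ⁿ xᵢ log xᵢ) + (1/2)h̃(x), where h̃ is C² on a neighborhood of 0 in ℝⁿ. Then for all i, j, the (i,j) cofactor of the Hessian G(x) of g satisfies x₁⋯xₙ · Cof(G(x))ᵢⱼ → 0 as x → 0 within (0,∞)ⁿ when i ≠ j, and x₁⋯xₙ · Cof(G(x))ᵢᵢ = O(xᵢ) as x → 0. -/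
open Matrix Filter

/-- Let `g(x) = (1/2)∑ xᵢ log xᵢ + (1/2) h̃(x)` with `h̃` C² near `0`, so that the Hessian
of `g` is `G(x)ᵢⱼ = δᵢⱼ/(2xⱼ) + (1/2) h̃ᵢⱼ(x)`.  Then `x₁⋯xₙ · Cof(G(x))ᵢⱼ → 0` as
`x → 0` within the positive orthant for `i ≠ j`, and `x₁⋯xₙ · Cof(G(x))ᵢᵢ = O(xᵢ)`.
(`Cof(A)ᵢⱼ = adjugate A j i`.) -/
theorem stmt13 (n : ℕ) (h : (Fin n → ℝ) → ℝ) (U : Set (Fin n → ℝ))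
    (hU : IsOpen U) (h0U : (0 : Fin n → ℝ) ∈ U) (hh : ContDiffOn ℝ 2 h U)
    (G : (Fin n → ℝ) → Matrix (Fin n) (Fin n) ℝ)
    (hG : ∀ x : Fin n → ℝ, ∀ i j, G x i j = (if i = j then 1 / (2 * x j) else 0) +
      (1/2) * fderiv ℝ (fun y => fderiv ℝ h y (Pi.single j 1)) x (Pi.single i 1)) :
    ∀ i j,
      (i ≠ j → Tendsto (fun x : Fin n → ℝ => (∏ k, x k) * (Matrix.adjugate (G x)) j i)
        (nhdsWithin 0 {x : Fin n → ℝ | ∀ k, 0 < x k}) (nhds 0)) ∧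
      (∃ C > 0, ∃ ε > 0, ∀ x : Fin n → ℝ, (∀ k, 0 < x k) → ‖x‖ < ε →
        |(∏ k, x k) * (Matrix.adjugate (G x)) i i| ≤ C * x i) := by
  classical
  set F := nhdsWithin (0 : Fin n → ℝ) {x : Fin n → ℝ | ∀ k, 0 < x k} with hF
  set H : (Fin n → ℝ) → Fin n → Fin n → ℝ :=
    fun x k l => fderiv ℝ (fun y => fderiv ℝ h y (Pi.single l 1)) x (Pi.single k 1) with hHdef
  -- continuity of the second partials near 0
  have hf1 : ContDiffOn ℝ 1 (fderiv ℝ h) U := hh.fderiv_of_isOpen hU (by norm_num)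
  have hHc : ∀ k l, Tendsto (fun x => H x k l) F (nhds (H 0 k l)) := by
    intro k l
    have h2 : ContDiffOn ℝ 1 (fun y => fderiv ℝ h y (Pi.single l 1)) U :=
      hf1.clm_apply contDiffOn_const
    have h3 : ContDiffOn ℝ 0 (fderiv ℝ (fun y => fderiv ℝ h y (Pi.single l 1))) U :=
      h2.fderiv_of_isOpen hU (by norm_num)
    have h4 : ContinuousOn (fun x => H x k l) U :=
      (h3.clm_apply contDiffOn_const).continuousOn
    exact ((h4.continuousAt (hU.mem_nhds h0U)).tendsto).mono_left nhdsWithin_le_nhds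
  have hev : ∀ᶠ x in F, ∀ k, 0 < x k := self_mem_nhdsWithin
  -- evaluation tends to 0
  have hevk : ∀ k : Fin n, Tendsto (fun x : Fin n → ℝ => x k) F (nhds 0) := by
    intro k
    have := ((continuous_apply k).tendsto (0 : Fin n → ℝ)).mono_left
      (nhdsWithin_le_nhds : F ≤ nhds 0)
    simpa using this
  -- limit matrix
  set D : Matrix (Fin n) (Fin n) ℝ := Matrix.of fun k l => if k = l then (1/2 : ℝ) else 0 with hD
  -- key convergence lemma
  have key : ∀ (i : Fin n) (r : (Fin n → ℝ) → Fin n → ℝ) (w : Fin n → ℝ),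
      Tendsto r F (nhds w) →
      Tendsto (fun x => ((Matrix.of fun k l => x l * G x k l).updateRow i (r x)).det) F
        (nhds ((D.updateRow i w).det)) := by
    intro i r w hr
    have hN : Tendsto (fun x => (Matrix.of fun k l => x l * G x k l).updateRow i (r x)) F
        (nhds (D.updateRow i w)) := by
      apply tendsto_pi_nhds.mpr
      intro k
      apply tendsto_pi_nhds.mpr
      intro l
      by_cases hk : k = i
      · subst hk
        simp only [Matrix.updateRow_self]
        exact (tendsto_pi_nhds.mp hr) l
      · simp only [Matrix.updateRow_ne hk, Matrix.of_apply]
        have hlim : Tendsto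
            (fun x : Fin n → ℝ => (if k = l then (1/2 : ℝ) else 0) + x l * ((1/2) * H x k l))
            F (nhds ((if k = l then (1/2 : ℝ) else 0) + 0 * ((1/2) * H 0 k l))) :=
          tendsto_const_nhds.add ((hevk l).mul (tendsto_const_nhds.mul (hHc k l)))
        have heq : ∀ᶠ x in F, (if k = l then (1/2 : ℝ) else 0) + x l * ((1/2) * H x k l)
            = x l * G x k l := by
          filter_upwards [hev] with x hx
          rw [hG x k l]
          by_cases hkl : k = l
          · subst hkl
            have : x k ≠ 0 := (hx k).ne'
            simp only [if_pos rfl, if_true]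
            field_simp
            ring
          · simp only [if_neg hkl]
            ring
        have := hlim.congr' heq
        simpa [hD, one_div] using this
    exact ((Continuous.matrix_det continuous_id).tendsto _).comp hN
  -- the algebraic identity
  have hiden : ∀ (i j : Fin n) (x : Fin n → ℝ),
      (∏ k, x k) * (Matrix.adjugate (G x)) j i
        = ((Matrix.of fun k l => x l * G x k l).updateRow i
            (fun l => x l * (Pi.single j 1 : Fin n → ℝ) l)).det := by
    intro i j x
    rw [Matrix.adjugate_apply, ← Matrix.det_mul_row]
    congr 1
    ext k l
    by_cases hk : k = i
    · simp [hk]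
    · simp [Matrix.updateRow_ne hk]
  intro i j
  constructor
  · -- off-diagonal: tends to 0
    intro hij
    have hr : Tendsto (fun x : Fin n → ℝ => (fun l => x l * (Pi.single j 1 : Fin n → ℝ) l))
        F (nhds (0 : Fin n → ℝ)) := by
      rw [tendsto_pi_nhds]
      intro l
      by_cases hl : l = j
      · subst hl
        have := (hevk l).mul (tendsto_const_nhds : Tendsto (fun _ : Fin n → ℝ => (1:ℝ)) F _)
        simpa [hD, one_div] using this
      · simpa [Pi.single_eq_of_ne hl] using
          (tendsto_const_nhds : Tendsto (fun _ : Fin n → ℝ => (0 : ℝ)) F _)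
    have hk := key i _ _ hr
    have hzero : ((D.updateRow i (0 : Fin n → ℝ)).det) = 0 := by
      apply Matrix.det_eq_zero_of_row_eq_zero i
      intro l
      simp
    rw [hzero] at hk
    exact hk.congr (fun x => (hiden i j x).symm)
  · -- diagonal: O(x i)
    have hfac : ∀ x : Fin n → ℝ,
        ((Matrix.of fun k l => x l * G x k l).updateRow i
            (fun l => x l * (Pi.single i 1 : Fin n → ℝ) l)).det
          = x i * ((Matrix.of fun k l => x l * G x k l).updateRow i (Pi.single i 1)).det := by
      intro x
      rw [← Matrix.det_updateRow_smul]
      congr 1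
      ext k l
      by_cases hk : k = i
      · rw [hk]
        simp only [Matrix.updateRow_self, Pi.smul_apply, smul_eq_mul]
        by_cases hl : l = i
        · rw [hl]
        · simp [Pi.single_eq_of_ne hl]
      · simp [Matrix.updateRow_ne hk]
    set c : ℝ := (D.updateRow i (Pi.single i 1)).det with hc
    have hk := key i (fun _ => Pi.single i 1) (Pi.single i 1) tendsto_const_nhds
    have habs : Tendsto
        (fun x => |((Matrix.of fun k l => x l * G x k l).updateRow i (Pi.single i 1)).det|)
        F (nhds |c|) := (continuous_abs.tendsto c).comp hk
    have hlt : ∀ᶠ x in F,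
        |((Matrix.of fun k l => x l * G x k l).updateRow i (Pi.single i 1)).det| < |c| + 1 :=
      habs.eventually_lt_const (by linarith [abs_nonneg c])
    rw [eventually_iff, hF, Metric.mem_nhdsWithin_iff] at hlt
    obtain ⟨ε, hε, hball⟩ := hlt
    refine ⟨|c| + 1, by positivity, ε, hε, fun x hx hxε => ?_⟩
    have hxmem : x ∈ Metric.ball (0 : Fin n → ℝ) ε ∩ {x : Fin n → ℝ | ∀ k, 0 < x k} := by
      constructor
      · simpa [Metric.mem_ball, dist_zero_right] using hxε
      · exact hx
    have hb := hball hxmem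
    rw [hiden i i x, hfac x, abs_mul, abs_of_pos (hx i)]
    rw [mul_comm (|c| + 1) (x i)]
    exact mul_le_mul_of_nonneg_left (le_of_lt hb) (le_of_lt (hx i))
end
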